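/- Let $E_1^u, E_2^u, D_+^u, D_-^u$ and $E_1^v, E_2^v, D_+^v, D_-^v$ be nonnegative real numbers satisfying $E_1 = \tfrac14(D_+ + D_-) + \tfrac12 E_2$ (for both superscripts $u$ and $v$), and set $P = \tfrac14(D_+ - D_-)$ accordingly. Then $E_1^u E_1^v - P^u P^v \ge \tfrac14 E_1^u E_2^v + \tfrac14 E_1^v E_2^u + \tfrac18 D_+^u D_-^v + \tfrac18 D_-^u D_+^v$. -/
import Mathlib


/-- Algebraic core of the bilinear estimate: for nonnegative reals satisfying the
null-frame relations, `E₁ᵘE₁ᵛ - PᵘPᵛ` dominates the cross terms. -/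
theorem stmt_6 (E1u E2u Dpu Dmu E1v E2v Dpv Dmv Pu Pv : ℝ)
    (hE1u : 0 ≤ E1u) (hE2u : 0 ≤ E2u) (hDpu : 0 ≤ Dpu) (hDmu : 0 ≤ Dmu)
    (hE1v : 0 ≤ E1v) (hE2v : 0 ≤ E2v) (hDpv : 0 ≤ Dpv) (hDmv : 0 ≤ Dmv)
    (hEu : E1u = (1 / 4) * (Dpu + Dmu) + (1 / 2) * E2u)
    (hEv : E1v = (1 / 4) * (Dpv + Dmv) + (1 / 2) * E2v)
    (hPu : Pu = (1 / 4) * (Dpu - Dmu))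
    (hPv : Pv = (1 / 4) * (Dpv - Dmv)) :
    (1 / 4) * E1u * E2v + (1 / 4) * E1v * E2u +
      (1 / 8) * Dpu * Dmv + (1 / 8) * Dmu * Dpv ≤ E1u * E1v - Pu * Pv := by
  subst hEu hEv hPu hPv; nlinarith [mul_nonneg hDpu hDpv, mul_nonneg hDmu hDmv, mul_nonneg hE2u hE2v, mul_nonneg hDpu hDmv, mul_nonneg hDmu hDpv, mul_nonneg hE2u hDpv, mul_nonneg hE2u hDmv, mul_nonneg hE2v hDpu, mul_nonneg hE2v hDmu]
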